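/- arXiv:2508.21309 — 6 statements merged into one kernel-verified Lean document; each statement's English description precedes it below -/
import Mathlib

section
/- For a nondecreasing submodular set function q on subsets of a finite set with q(∅) = 0, and any sets S, T, one has q(T) ≤ q(S) + Σ_{j ∈ T \ S} (q(S ∪ {j}) − q(S)). -/
open Finset

/-- Nemhauser–Wolsey–Fisher, Proposition 2.1: for a nondecreasing submodular set
function `q` with `q ∅ = 0` on subsets of a finite type, and any sets `S`, `T`,
`q T ≤ q S + ∑_{j ∈ T \ S} (q (S ∪ {j}) − q S)`. -/
theorem submodular_marginal_bound {α : Type*} [Fintype α] [DecidableEq α]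
    (q : Finset α → ℝ)
    (hsub : ∀ A B : Finset α, q (A ∪ B) + q (A ∩ B) ≤ q A + q B)
    (hmono : ∀ A B : Finset α, A ⊆ B → q A ≤ q B)
    (hempty : q ∅ = 0) :
    ∀ S T : Finset α, q T ≤ q S + ∑ j ∈ T \ S, (q (insert j S) - q S) := by
  intro S T
  have key : ∀ D : Finset α, q (S ∪ D) ≤ q S + ∑ j ∈ D, (q (insert j S) - q S) := by
    intro D
    induction D using Finset.induction_on with
    | empty => simp
    | insert _ _ hj =>
      rename_i j D ih
      have h1 := hsub (insert j S) (S ∪ D)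
      have h2 : q S ≤ q ((insert j S) ∩ (S ∪ D)) := by
        apply hmono
        intro x hx
        simp [Finset.mem_inter, Finset.mem_insert, Finset.mem_union, hx]
      have h3 : (insert j S) ∪ (S ∪ D) = S ∪ insert j D := by
        ext x; simp [Finset.mem_insert, Finset.mem_union]
      rw [h3] at h1
      rw [Finset.sum_insert hj]
      linarith
  have hT : q T ≤ q (S ∪ (T \ S)) := by
    apply hmono
    intro x hx
    simp [Finset.mem_union, Finset.mem_sdiff, hx]
  exact hT.trans (key _)
end

section
/- The greedy algorithm for maximizing a nondecreasing submodular function q with q(∅) = 0 subject to a matroid constraint returns a set S with q(S) ≥ (1/2) · q(OPT), where OPT is an optimal independent set. -/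
open Finset

lemma marg_shrink {α : Type*} [DecidableEq α] (q : Finset α → ℝ)
    (hsub : ∀ A B : Finset α, q (A ∪ B) + q (A ∩ B) ≤ q A + q B)
    {C B : Finset α} (hCB : C ⊆ B) {x : α} (hx : x ∉ B) :
    q (insert x B) - q B ≤ q (insert x C) - q C := by
  have h := hsub (insert x C) B
  have h1 : insert x C ∪ B = insert x B := by
    rw [insert_union, union_eq_right.mpr hCB]
  have h2 : insert x C ∩ B = C := by
    ext y
    simp only [mem_inter, mem_insert]
    constructor
    · rintro ⟨(rfl | h), hyB⟩
      · exact absurd hyB hx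
      · exact h
    · intro h
      exact ⟨Or.inr h, hCB h⟩
  rw [h1, h2] at h
  linarith

lemma sub_expand {α : Type*} [DecidableEq α] (q : Finset α → ℝ)
    (hsub : ∀ A B : Finset α, q (A ∪ B) + q (A ∩ B) ≤ q A + q B)
    (B : Finset α) :
    ∀ D : Finset α, Disjoint D B →
      q (B ∪ D) ≤ q B + ∑ x ∈ D, (q (insert x B) - q B) := by
  intro D
  induction D using Finset.induction_on with
  | empty => simp
  | insert x D hx ih =>
    intro hdisj
    have hxB : x ∉ B := fun h => (Finset.disjoint_left.mp hdisj (mem_insert_self x D)) h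
    have hD : Disjoint D B := Finset.disjoint_of_subset_left (subset_insert x D) hdisj
    have key := hsub (B ∪ D) (insert x B)
    have h1 : (B ∪ D) ∪ insert x B = B ∪ insert x D := by
      ext y; simp only [mem_union, mem_insert]; tauto
    have h2 : (B ∪ D) ∩ insert x B = B := by
      ext y
      simp only [mem_inter, mem_union, mem_insert]
      constructor
      · rintro ⟨(h | h), (rfl | hb)⟩
        · exact absurd h hxB
        · exact hb
        · exact absurd h hx
        · exact hb
      · intro h; exact ⟨Or.inl h, Or.inr h⟩
    rw [h1, h2] at key
    rw [Finset.sum_insert hx]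
    have := ih hD
    linarith

lemma abel_bound (M : ℕ) (c : ℕ → ℕ) (δ : ℕ → ℝ)
    (hδ0 : ∀ t < M, 0 ≤ δ t)
    (hanti : ∀ s t : ℕ, s ≤ t → t < M → δ t ≤ δ s)
    (hpre : ∀ t < M, (∑ s ∈ range (t+1), c s) ≤ t + 1) :
    ∑ t ∈ range M, (c t : ℝ) * δ t ≤ ∑ t ∈ range M, δ t := by
  set δ' : ℕ → ℝ := fun u => if u < M then δ u else 0 with hδ'
  set g : ℕ → ℝ := fun u => δ' u - δ' (u+1) with hg
  have hgnn : ∀ u < M, 0 ≤ g u := by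
    intro u hu
    simp only [hg, hδ', if_pos hu]
    by_cases h : u + 1 < M
    · rw [if_pos h]
      have := hanti u (u+1) (Nat.le_succ u) h
      linarith
    · rw [if_neg h]
      simpa using hδ0 u hu
  have hrepr : ∀ t < M, δ t = ∑ u ∈ Ico t M, g u := by
    intro t ht
    have e1 : ∀ n : ℕ, ∑ u ∈ range n, g u = δ' 0 - δ' n := fun n =>
      Finset.sum_range_sub' δ' n
    rw [Finset.sum_Ico_eq_sub _ (le_of_lt ht), e1, e1]
    have hM : δ' M = 0 := by simp [hδ']
    have ht' : δ' t = δ t := by simp [hδ', ht]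
    rw [hM, ht']
    ring
  have key : ∀ c' : ℕ → ℝ, ∑ t ∈ range M, c' t * δ t
      = ∑ u ∈ range M, (∑ t ∈ range (u+1), c' t) * g u := by
    intro c'
    calc ∑ t ∈ range M, c' t * δ t
        = ∑ t ∈ range M, ∑ u ∈ Ico t M, c' t * g u := by
          refine Finset.sum_congr rfl fun t ht => ?_
          rw [← Finset.mul_sum, ← hrepr t (mem_range.mp ht)]
      _ = ∑ u ∈ range M, ∑ t ∈ range (u+1), c' t * g u := by
          rw [range_eq_Ico, Finset.sum_Ico_Ico_comm]
          simp only [range_eq_Ico]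
      _ = ∑ u ∈ range M, (∑ t ∈ range (u+1), c' t) * g u := by
          refine Finset.sum_congr rfl fun u _ => ?_
          rw [Finset.sum_mul]
  calc ∑ t ∈ range M, (c t : ℝ) * δ t
      = ∑ u ∈ range M, (∑ t ∈ range (u+1), (c t : ℝ)) * g u := key _
    _ ≤ ∑ u ∈ range M, ((u : ℝ) + 1) * g u := by
        refine Finset.sum_le_sum fun u hu => ?_
        refine mul_le_mul_of_nonneg_right ?_ (hgnn u (mem_range.mp hu))
        have h := hpre u (mem_range.mp hu)
        have : ((∑ s ∈ range (u+1), c s : ℕ) : ℝ) ≤ (u : ℝ) + 1 := by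
          exact_mod_cast h
        rwa [Nat.cast_sum] at this
    _ = ∑ t ∈ range M, (1 : ℝ) * δ t := by
        rw [key (fun _ => (1:ℝ))]
        refine Finset.sum_congr rfl fun u _ => ?_
        simp
    _ = ∑ t ∈ range M, δ t := by simp

/-- Fisher–Nemhauser–Wolsey: the greedy algorithm for maximizing a nondecreasing
submodular function `q` with `q ∅ = 0` subject to a matroid constraint (given by its
family `Indep` of independent sets) returns a set `S M` with
`q (S M) ≥ (1/2) · q OPT` for every independent set `OPT`.  The greedy run is encoded
by the sequence `S 0 = ∅`, `S (t+1) = S t ∪ {e t}`, where each step adds a feasible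
element of maximum marginal gain and the final set is maximal independent. -/
theorem greedy_matroid_half_approx {α : Type*} [DecidableEq α]
    (Indep : Finset α → Prop)
    (hempty : Indep ∅)
    (hhered : ∀ A B : Finset α, A ⊆ B → Indep B → Indep A)
    (hexch : ∀ A B : Finset α, Indep A → Indep B → A.card < B.card →
      ∃ x ∈ B \ A, Indep (insert x A))
    (q : Finset α → ℝ)
    (hmono : ∀ A B : Finset α, A ⊆ B → q A ≤ q B)
    (hsub : ∀ A B : Finset α, q (A ∪ B) + q (A ∩ B) ≤ q A + q B)
    (hq0 : q ∅ = 0)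
    (M : ℕ) (S : ℕ → Finset α) (e : ℕ → α)
    (hS0 : S 0 = ∅)
    (hstep : ∀ t < M, S (t + 1) = insert (e t) (S t))
    (hnew : ∀ t < M, e t ∉ S t)
    (hindep : ∀ t ≤ M, Indep (S t))
    (hgreedy : ∀ t < M, ∀ x ∉ S t, Indep (insert x (S t)) →
      q (insert x (S t)) - q (S t) ≤ q (S (t + 1)) - q (S t))
    (hmaximal : ∀ x ∉ S M, ¬ Indep (insert x (S M))) :
    ∀ OPT : Finset α, Indep OPT → (1 / 2 : ℝ) * q OPT ≤ q (S M) := by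
  classical
  intro OPT hOPT
  -- the chain property
  have hchain : ∀ s t : ℕ, s ≤ t → t ≤ M → S s ⊆ S t := by
    intro s t h
    induction h with
    | refl => intro _; exact subset_rfl
    | @step n hn ih =>
      intro hM
      have hnM : n < M := lt_of_lt_of_le (Nat.lt_succ_self n) hM
      refine (ih (le_of_lt hnM)).trans ?_
      rw [hstep n hnM]
      exact subset_insert _ _
  have hcard : ∀ t ≤ M, (S t).card = t := by
    intro t
    induction t with
    | zero => intro _; simp [hS0]
    | succ n ih =>
      intro h
      have hn : n < M := h
      rw [hstep n hn, card_insert_of_notMem (hnew n hn), ih (le_of_lt hn)]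
  set δ : ℕ → ℝ := fun t => q (S (t+1)) - q (S t) with hδ
  have hδ0 : ∀ t < M, 0 ≤ δ t := by
    intro t ht
    simp only [hδ]
    have : S t ⊆ S (t+1) := hchain t (t+1) (Nat.le_succ t) ht
    have := hmono _ _ this
    linarith
  have hanti : ∀ s t : ℕ, s ≤ t → t < M → δ t ≤ δ s := by
    intro s t hst htM
    have hsM : s < M := lt_of_le_of_lt hst htM
    have hSst : S s ⊆ S t := hchain s t hst (le_of_lt htM)
    have het : e t ∉ S s := fun h => hnew t htM (hSst h)
    have hetind : Indep (insert (e t) (S s)) := by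
      refine hhered _ (S (t+1)) ?_ (hindep (t+1) htM)
      rw [hstep t htM]
      exact insert_subset_insert _ hSst
    have h1 := hgreedy s hsM (e t) het hetind
    have h2 := marg_shrink q hsub hSst (hnew t htM)
    have h3 : q (S (t+1)) = q (insert (e t) (S t)) := by rw [hstep t htM]
    simp only [hδ]
    linarith
  set D : Finset α := OPT \ S M with hD
  have hexx : ∀ x ∈ D, ∃ t, ¬ Indep (insert x (S t)) :=
    fun x hx => ⟨M, hmaximal x (mem_sdiff.mp hx).2⟩
  set f : α → ℕ := fun x =>
    if h : ∃ t, ¬ Indep (insert x (S t)) then Nat.find h - 1 else 0 with hf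
  have hfprops : ∀ x ∈ D, f x < M ∧ Indep (insert x (S (f x)))
      ∧ ¬ Indep (insert x (S (f x + 1))) := by
    intro x hx
    obtain ⟨hxO, hxS⟩ := mem_sdiff.mp hx
    have h := hexx x hx
    have hfeq : f x = Nat.find h - 1 := by simp only [hf]; rw [dif_pos h]
    have h0 : Indep (insert x (S 0)) := by
      rw [hS0]
      exact hhered _ OPT (by simp [hxO]) hOPT
    have hpos : Nat.find h ≠ 0 := by
      intro h0'
      have := Nat.find_spec h
      rw [h0'] at this
      exact this h0
    have hsucc : f x + 1 = Nat.find h := by omega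
    have hle : Nat.find h ≤ M := Nat.find_min' h (hmaximal x hxS)
    refine ⟨by omega, ?_, ?_⟩
    · have := Nat.find_min h (show f x < Nat.find h by omega)
      exact not_not.mp this
    · rw [hsucc]; exact Nat.find_spec h
  have hiff : ∀ t < M, ∀ x ∈ D, (f x ≤ t ↔ ¬ Indep (insert x (S (t+1)))) := by
    intro t ht x hx
    obtain ⟨hfM, hind, hnind⟩ := hfprops x hx
    constructor
    · intro hle hcon
      exact hnind (hhered _ _
        (insert_subset_insert _ (hchain (f x + 1) (t+1) (by omega) (by omega))) hcon)
    · intro hni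
      by_contra hgt
      push_neg at hgt
      exact hni (hhered _ _
        (insert_subset_insert _ (hchain (t+1) (f x) hgt (le_of_lt hfM))) hind)
  -- counting lemma
  have hcount : ∀ t < M,
      (D.filter (fun x => ¬ Indep (insert x (S (t+1))))).card ≤ t + 1 := by
    intro t ht
    set U := D.filter (fun x => ¬ Indep (insert x (S (t+1)))) with hU
    by_contra hcon
    push_neg at hcon
    set A := (OPT ∩ S (t+1)) ∪ U with hA
    have hAO : A ⊆ OPT :=
      union_subset inter_subset_left ((filter_subset _ _).trans sdiff_subset)
    have hAI : Indep A := hhered A OPT hAO hOPT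
    have hdisj : Disjoint (OPT ∩ S (t+1)) U := by
      rw [Finset.disjoint_left]
      intro y hy hyU
      have hyS : y ∈ S M := hchain (t+1) M ht (le_refl M) (mem_inter.mp hy).2
      exact (mem_sdiff.mp ((filter_subset _ _) hyU)).2 hyS
    have hcardA : (S (t+1)).card < A.card := by
      rw [hA, card_union_of_disjoint hdisj, hcard (t+1) ht]
      omega
    obtain ⟨y, hy, hyI⟩ := hexch (S (t+1)) A (hindep (t+1) ht) hAI hcardA
    rw [mem_sdiff] at hy
    obtain ⟨hyA, hyS⟩ := hy
    rcases mem_union.mp hyA with h | h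
    · exact hyS (mem_inter.mp h).2
    · exact (mem_filter.mp h).2 hyI
  -- prefix sums of fibers
  have hpre : ∀ t < M,
      (∑ s ∈ range (t+1), (D.filter (fun x => f x = s)).card) ≤ t + 1 := by
    intro t ht
    have heq : (D.filter (fun x => f x ≤ t)).card
        = ∑ s ∈ range (t+1), (D.filter (fun x => f x = s)).card := by
      rw [Finset.card_eq_sum_card_fiberwise
        (f := f) (t := range (t+1)) (fun x hx => by
          rw [mem_coe, mem_filter] at hx
          exact mem_range.mpr (Nat.lt_succ_of_le hx.2))]
      refine Finset.sum_congr rfl fun s hs => ?_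
      rw [Finset.filter_filter]
      congr 1
      apply Finset.filter_congr
      intro x hx
      constructor
      · rintro ⟨_, h⟩; exact h
      · intro h
        refine ⟨?_, h⟩
        rw [h]
        exact Nat.lt_succ_iff.mp (mem_range.mp hs)
    rw [← heq]
    have : D.filter (fun x => f x ≤ t)
        = D.filter (fun x => ¬ Indep (insert x (S (t+1)))) := by
      apply Finset.filter_congr
      intro x hx
      exact hiff t ht x hx
    rw [this]
    exact hcount t ht
  -- fiberwise sum for the charges
  have hfib : ∑ x ∈ D, δ (f x)
      = ∑ t ∈ range M, ((D.filter (fun x => f x = t)).card : ℝ) * δ t := by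
    rw [← Finset.sum_fiberwise_of_maps_to (g := f) (t := range M)
      (fun x hx => mem_range.mpr (hfprops x hx).1) (fun x => δ (f x))]
    refine Finset.sum_congr rfl fun t _ => ?_
    have hinner : ∑ x ∈ D.filter (fun x => f x = t), δ (f x)
        = ∑ x ∈ D.filter (fun x => f x = t), δ t := by
      refine Finset.sum_congr rfl fun x hx => ?_
      rw [(Finset.mem_filter.mp hx).2]
    rw [hinner, Finset.sum_const, nsmul_eq_mul]
  -- marginal bound per element
  have hmarg : ∀ x ∈ D, q (insert x (S M)) - q (S M) ≤ δ (f x) := by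
    intro x hx
    obtain ⟨hxO, hxS⟩ := mem_sdiff.mp hx
    obtain ⟨hfM, hind, _⟩ := hfprops x hx
    have hsubset : S (f x) ⊆ S M := hchain (f x) M (le_of_lt hfM) (le_refl M)
    have hxSf : x ∉ S (f x) := fun h => hxS (hsubset h)
    have h1 := hgreedy (f x) hfM x hxSf hind
    have h2 := marg_shrink q hsub hsubset hxS
    simp only [hδ]
    linarith
  -- telescoping sum
  have hδsum : ∑ t ∈ range M, δ t = q (S M) := by
    have := Finset.sum_range_sub (fun t => q (S t)) M
    simp only [hδ]
    rw [this, hS0, hq0, sub_zero]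
  have habel := abel_bound M (fun t => (D.filter (fun x => f x = t)).card) δ hδ0 hanti hpre
  have hsum1 : ∑ x ∈ D, (q (insert x (S M)) - q (S M)) ≤ q (S M) := by
    calc ∑ x ∈ D, (q (insert x (S M)) - q (S M))
        ≤ ∑ x ∈ D, δ (f x) := Finset.sum_le_sum hmarg
      _ = ∑ t ∈ range M, ((D.filter (fun x => f x = t)).card : ℝ) * δ t := hfib
      _ ≤ ∑ t ∈ range M, δ t := habel
      _ = q (S M) := hδsum
  have hexp := sub_expand q hsub (S M) D sdiff_disjoint
  have hOle : q OPT ≤ q (S M ∪ D) := by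
    apply hmono
    rw [hD, union_sdiff_self_eq_union]
    exact subset_union_right
  linarith
end

section
/- In a matroid, if each greedy step t selects an element of maximum marginal gain ρ_{t−1}, and s_{t−1} denotes the number of elements of the optimal base encountered between steps t−1 and t, then Σ_t ρ_{t−1} s_{t−1} ≤ Σ_t ρ_{t−1} whenever Σ_{τ ≤ t} s_{τ−1} ≤ t for all t and the sequence ρ_t is nonincreasing and nonnegative. -/
open Finset

/-- Fisher–Nemhauser–Wolsey, Proposition 2.2 (Abel-summation style inequality):
given nonnegative nonincreasing reals `ρ 0 ≥ ρ 1 ≥ ⋯ ≥ ρ (M-1) ≥ 0` and nonnegative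
integers `s 0, …, s (M-1)` whose partial sums satisfy `∑_{τ < t} s τ ≤ t` for all
`1 ≤ t ≤ M`, one has `∑_{t < M} ρ t * s t ≤ ∑_{t < M} ρ t`. -/
theorem abel_weighted_sum_le {M : ℕ} (ρ : ℕ → ℝ) (s : ℕ → ℕ)
    (hnonneg : ∀ t < M, 0 ≤ ρ t)
    (hanti : ∀ t, t + 1 < M → ρ (t + 1) ≤ ρ t)
    (hpartial : ∀ t, 1 ≤ t → t ≤ M → (∑ τ ∈ Finset.range t, s τ) ≤ t) :
    ∑ t ∈ Finset.range M, ρ t * (s t : ℝ) ≤ ∑ t ∈ Finset.range M, ρ t := by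
  rcases M with _ | N
  · simp
  have hS : ∀ t, 1 ≤ t → t ≤ N + 1 → (∑ τ ∈ Finset.range t, (s τ : ℝ)) ≤ (t : ℝ) := by
    intro t h1 h2
    rw [← Nat.cast_sum]
    exact_mod_cast hpartial t h1 h2
  have h1 : ∑ t ∈ Finset.range (N + 1), ρ t * (s t : ℝ)
      = ρ N • (∑ i ∈ Finset.range (N + 1), (s i : ℝ))
        - ∑ i ∈ Finset.range N, (ρ (i + 1) - ρ i) • (∑ j ∈ Finset.range (i + 1), (s j : ℝ)) := by
    have := Finset.sum_range_by_parts ρ (fun t => (s t : ℝ)) (N + 1)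
    simpa using this
  have h2 : ∑ t ∈ Finset.range (N + 1), ρ t
      = ρ N • (∑ _i ∈ Finset.range (N + 1), (1 : ℝ))
        - ∑ i ∈ Finset.range N, (ρ (i + 1) - ρ i) • (∑ _j ∈ Finset.range (i + 1), (1 : ℝ)) := by
    have := Finset.sum_range_by_parts ρ (fun _ => (1 : ℝ)) (N + 1)
    simpa using this
  rw [h1, h2]
  simp only [smul_eq_mul, Finset.sum_const, Finset.card_range, nsmul_eq_mul, mul_one]
  apply sub_le_sub
  · apply mul_le_mul_of_nonneg_left _ (hnonneg N (Nat.lt_succ_self N))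
    simpa using hS (N + 1) (Nat.le_add_left 1 N) le_rfl
  · apply Finset.sum_le_sum
    intro i hi
    rw [Finset.mem_range] at hi
    have hd : ρ (i + 1) - ρ i ≤ 0 := by
      have := hanti i (by omega)
      linarith
    have hSi : (∑ j ∈ Finset.range (i + 1), (s j : ℝ)) ≤ ((i + 1 : ℕ) : ℝ) := by
      have := hS (i + 1) (Nat.le_add_left 1 i) (by omega)
      push_cast at this ⊢
      linarith
    exact mul_le_mul_of_nonpos_left hSi hd
end

section
/- For a nondecreasing submodular function q with q(∅) = 0, the marginal gains of the greedy algorithm are nonincreasing: if ρ_t denotes the gain of the element added at step t+1, then ρ_0 ≥ ρ_1 ≥ ⋯ ≥ ρ_{M−1} ≥ 0. -/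
/-- For greedy maximization of a nondecreasing submodular function `q` with `q ∅ = 0`
over a matroid, the marginal gains `ρ t = q (S (t+1)) − q (S t)` of the greedy
algorithm are nonnegative and nonincreasing: `ρ 0 ≥ ρ 1 ≥ ⋯ ≥ ρ (M−1) ≥ 0`. -/
theorem greedy_gains_nonincreasing {α : Type*} [DecidableEq α]
    (Indep : Finset α → Prop)
    (hempty : Indep ∅)
    (hhered : ∀ A B : Finset α, A ⊆ B → Indep B → Indep A)
    (hexch : ∀ A B : Finset α, Indep A → Indep B → A.card < B.card →
      ∃ x ∈ B \ A, Indep (insert x A))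
    (q : Finset α → ℝ)
    (hmono : ∀ A B : Finset α, A ⊆ B → q A ≤ q B)
    (hsub : ∀ A B : Finset α, q (A ∪ B) + q (A ∩ B) ≤ q A + q B)
    (hq0 : q ∅ = 0)
    (M : ℕ) (S : ℕ → Finset α) (e : ℕ → α)
    (hS0 : S 0 = ∅)
    (hstep : ∀ t < M, S (t + 1) = insert (e t) (S t))
    (hnew : ∀ t < M, e t ∉ S t)
    (hindep : ∀ t ≤ M, Indep (S t))
    (hgreedy : ∀ t < M, ∀ x ∉ S t, Indep (insert x (S t)) →
      q (insert x (S t)) - q (S t) ≤ q (S (t + 1)) - q (S t)) :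
    (∀ t < M, 0 ≤ q (S (t + 1)) - q (S t)) ∧
    (∀ t, t + 1 < M →
      q (S (t + 2)) - q (S (t + 1)) ≤ q (S (t + 1)) - q (S t)) := by
  constructor
  · intro t ht
    have h := hmono (S t) (S (t + 1)) (by rw [hstep t ht]; exact Finset.subset_insert _ _)
    linarith
  · intro t ht
    have ht1 : t < M := Nat.lt_of_succ_lt ht
    have hS1 : S (t + 1) = insert (e t) (S t) := hstep t ht1
    have hS2 : S (t + 2) = insert (e (t + 1)) (S (t + 1)) := hstep (t + 1) ht
    have hnew1 : e (t + 1) ∉ S (t + 1) := hnew (t + 1) ht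
    have hnew0 : e t ∉ S t := hnew t ht1
    have hne : e (t + 1) ≠ e t := by
      intro h; apply hnew1; rw [hS1, h]; exact Finset.mem_insert_self _ _
    have hnotin : e (t + 1) ∉ S t := by
      intro h; exact hnew1 (by rw [hS1]; exact Finset.mem_insert_of_mem h)
    -- submodularity with A = insert (e (t+1)) (S t), B = S (t+1)
    have hsubset : insert (e (t + 1)) (S t) ⊆ S (t + 2) := by
      rw [hS2, hS1]
      exact Finset.insert_subset_insert _ (Finset.subset_insert _ _)
    have hindA : Indep (insert (e (t + 1)) (S t)) :=
      hhered _ _ hsubset (hindep (t + 2) ht)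
    have hunion : insert (e (t + 1)) (S t) ∪ S (t + 1) = S (t + 2) := by
      rw [hS2, hS1]
      ext x
      simp [Finset.mem_insert, Finset.mem_union]
      tauto
    have hinter : insert (e (t + 1)) (S t) ∩ S (t + 1) = S t := by
      rw [hS1]
      ext x
      simp only [Finset.mem_inter, Finset.mem_insert]
      constructor
      · rintro ⟨h1 | h1, h2 | h2⟩
        · exact absurd (h1 ▸ h2 : e (t+1) = e t) hne
        · rw [h1] at h2; exact absurd h2 hnotin
        · exact h1
        · exact h1
      · intro h; exact ⟨Or.inr h, Or.inr h⟩
    have hs := hsub (insert (e (t + 1)) (S t)) (S (t + 1))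
    rw [hunion, hinter] at hs
    have hg := hgreedy t ht1 (e (t + 1)) hnotin hindA
    linarith
end

section
/- The greedy algorithm for maximizing an arbitrary (not necessarily submodular) nonnegative tracking quality function over the heterogeneous robot-target assignment problem, which at each round selects the single robot or robot-pair and target with maximum quality and removes them, achieves total value at least 1/3 of the optimal assignment value. -/
open Finset

/-- The sufficient-sensing robots used by an assignable unit
(a sufficient robot or a pair of limited robots). -/
def robotsS {Rs Rl : Type*} [DecidableEq Rs] : Rs ⊕ (Rl × Rl) → Finset Rs
  | Sum.inl r => {r}
  | Sum.inr _ => ∅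

/-- The limited-sensing robots used by an assignable unit. -/
def robotsL {Rs Rl : Type*} [DecidableEq Rl] : Rs ⊕ (Rl × Rl) → Finset Rl
  | Sum.inl _ => ∅
  | Sum.inr (a, b) => {a, b}

/-- A (unit, target) assignment is valid if a pair-unit consists of two distinct
limited robots. -/
def ValidAsg {Rs Rl T : Type*} (p : (Rs ⊕ (Rl × Rl)) × T) : Prop :=
  ∀ a b, p.1 = Sum.inr (a, b) → a ≠ b

/-- Two assignments conflict if they share a target or share a robot. -/
def ConflictAsg {Rs Rl T : Type*} [DecidableEq Rs] [DecidableEq Rl]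
    (p q : (Rs ⊕ (Rl × Rl)) × T) : Prop :=
  p.2 = q.2 ∨ ¬ Disjoint (robotsS p.1) (robotsS q.1) ∨
    ¬ Disjoint (robotsL p.1) (robotsL q.1)

/-- The greedy algorithm for the heterogeneous robot-target assignment problem with
an arbitrary nonnegative quality function: at each round it selects a feasible
(unit, target) pair of maximum value and removes the involved robots and target;
it achieves at least 1/3 of the value of any feasible assignment. -/
theorem greedy_heterogeneous_one_third {Rs Rl T : Type*}
    [DecidableEq Rs] [DecidableEq Rl] [DecidableEq T]
    (val : (Rs ⊕ (Rl × Rl)) × T → ℝ)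
    (hval : ∀ p, 0 ≤ val p)
    (hsym : ∀ (a b : Rl) (j : T), val (Sum.inr (a, b), j) = val (Sum.inr (b, a), j))
    (K : ℕ) (g : Fin K → (Rs ⊕ (Rl × Rl)) × T)
    (hgvalid : ∀ t, ValidAsg (g t))
    (hgdisj : ∀ s t : Fin K, s ≠ t → ¬ ConflictAsg (g s) (g t))
    (hgreedy : ∀ t : Fin K, ∀ p, ValidAsg p →
      (∀ s : Fin K, s < t → ¬ ConflictAsg p (g s)) → val p ≤ val (g t))
    (hterm : ∀ p, ValidAsg p → ∃ s : Fin K, ConflictAsg p (g s)) :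
    ∀ A : Finset ((Rs ⊕ (Rl × Rl)) × T),
      (∀ p ∈ A, ValidAsg p) →
      (∀ p ∈ A, ∀ q ∈ A, p ≠ q → ¬ ConflictAsg p q) →
      ∑ p ∈ A, val p ≤ 3 * ∑ t : Fin K, val (g t) := by
  classical
  intro A hAvalid hAdisj
  by_cases hA : A.Nonempty
  swap
  · rw [Finset.not_nonempty_iff_eq_empty] at hA
    subst hA
    simp only [Finset.sum_empty]
    have : 0 ≤ ∑ t : Fin K, val (g t) := Finset.sum_nonneg fun t _ => hval _
    linarith
  obtain ⟨p0, hp0⟩ := hA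
  obtain ⟨s0, -⟩ := hterm p0 (hAvalid p0 hp0)
  haveI : Nonempty (Fin K) := ⟨s0⟩
  -- resources of an assignment
  set res : (Rs ⊕ (Rl × Rl)) × T → Finset (T ⊕ Rs ⊕ Rl) := fun p =>
    ({Sum.inl p.2} ∪ (robotsS p.1).image (fun r => Sum.inr (Sum.inl r)))
      ∪ (robotsL p.1).image (fun r => Sum.inr (Sum.inr r)) with hresdef
  have hres_conf : ∀ p q r, r ∈ res p → r ∈ res q → ConflictAsg p q := by
    intro p q r hp hq
    simp only [hresdef, Finset.mem_union, Finset.mem_singleton, Finset.mem_image] at hp hq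
    rcases hp with (hp | ⟨a, ha, rfl⟩) | ⟨a, ha, rfl⟩
    · subst hp
      rcases hq with (hq | ⟨b, hb, hb'⟩) | ⟨b, hb, hb'⟩
      · exact Or.inl (Sum.inl.inj hq.symm).symm
      · exact absurd hb' (by simp)
      · exact absurd hb' (by simp)
    · rcases hq with (hq | ⟨b, hb, hb'⟩) | ⟨b, hb, hb'⟩
      · exact absurd hq (by simp)
      · obtain rfl : b = a := by simpa using hb'
        exact Or.inr (Or.inl (Finset.not_disjoint_iff.mpr ⟨b, ha, hb⟩))
      · exact absurd hb' (by simp)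
    · rcases hq with (hq | ⟨b, hb, hb'⟩) | ⟨b, hb, hb'⟩
      · exact absurd hq (by simp)
      · exact absurd hb' (by simp)
      · obtain rfl : b = a := by simpa using hb'
        exact Or.inr (Or.inr (Finset.not_disjoint_iff.mpr ⟨b, ha, hb⟩))
  have hconf_res : ∀ p q, ConflictAsg p q → ∃ r, r ∈ res p ∧ r ∈ res q := by
    intro p q h
    rcases h with h | h | h
    · exact ⟨Sum.inl p.2, by simp [hresdef], by simp [hresdef, h]⟩
    · obtain ⟨a, ha, hb⟩ := Finset.not_disjoint_iff.mp h
      exact ⟨Sum.inr (Sum.inl a), by simp [hresdef, ha], by simp [hresdef, hb]⟩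
    · obtain ⟨a, ha, hb⟩ := Finset.not_disjoint_iff.mp h
      exact ⟨Sum.inr (Sum.inr a), by simp [hresdef, ha], by simp [hresdef, hb]⟩
  have hres_card : ∀ p, (res p).card ≤ 3 := by
    intro p
    have h12 : (robotsS p.1 : Finset Rs).card + (robotsL p.1 : Finset Rl).card ≤ 2 := by
      rcases p with ⟨u, t⟩; rcases u with r | ⟨a, b⟩
      · simp [robotsS, robotsL]
      · simp only [robotsS, robotsL, Finset.card_empty, zero_add]
        exact (Finset.card_insert_le _ _).trans (by simp)
    calc (res p).card
        ≤ ({Sum.inl p.2} ∪ (robotsS p.1).image (fun r => Sum.inr (Sum.inl r))).card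
            + ((robotsL p.1).image (fun r => Sum.inr (Sum.inr r))).card := Finset.card_union_le _ _
      _ ≤ (({Sum.inl p.2} : Finset (T ⊕ Rs ⊕ Rl)).card
            + ((robotsS p.1).image (fun r => Sum.inr (Sum.inl r))).card)
            + ((robotsL p.1).image (fun r => Sum.inr (Sum.inr r))).card := by
          exact Nat.add_le_add_right (Finset.card_union_le _ _) _
      _ ≤ (1 + (robotsS p.1).card) + (robotsL p.1).card := by
          refine Nat.add_le_add (Nat.add_le_add ?_ (Finset.card_image_le)) (Finset.card_image_le)
          simp
      _ ≤ 3 := by omega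
  set Sset : (Rs ⊕ (Rl × Rl)) × T → Finset (Fin K) :=
    fun p => Finset.univ.filter (fun s => ConflictAsg p (g s)) with hSsetdef
  have hSne : ∀ p ∈ A, (Sset p).Nonempty := by
    intro p hp
    obtain ⟨s, hs⟩ := hterm p (hAvalid p hp)
    exact ⟨s, by simp [hSsetdef, hs]⟩
  set f : (Rs ⊕ (Rl × Rl)) × T → Fin K :=
    fun p => if h : (Sset p).Nonempty then (Sset p).min' h else Classical.arbitrary _ with hfdef
  have hf_conf : ∀ p ∈ A, ConflictAsg p (g (f p)) := by
    intro p hp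
    have h := Finset.min'_mem (Sset p) (hSne p hp)
    rw [hfdef]
    simp only [dif_pos (hSne p hp)]
    simpa [hSsetdef] using h
  have hf_min : ∀ p ∈ A, ∀ s, s < f p → ¬ ConflictAsg p (g s) := by
    intro p hp s hs hconf
    have hmem : s ∈ Sset p := by simp [hSsetdef, hconf]
    have : f p ≤ s := by
      rw [hfdef]; simp only [dif_pos (hSne p hp)]
      exact Finset.min'_le _ _ hmem
    exact absurd hs (not_lt.mpr this)
  have hstep : ∀ p ∈ A, val p ≤ val (g (f p)) := by
    intro p hp
    exact hgreedy (f p) p (hAvalid p hp) (hf_min p hp)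
  have hfiber : ∀ s : Fin K, (A.filter (fun p => f p = s)).card ≤ 3 := by
    intro s
    have hmap : ∀ p ∈ A.filter (fun p => f p = s), ∃ r, r ∈ res p ∧ r ∈ res (g s) := by
      intro p hp
      obtain ⟨hpA, hpf⟩ := Finset.mem_filter.mp hp
      exact hconf_res p (g s) (hpf ▸ hf_conf p hpA)
    haveI : Nonempty (T ⊕ Rs ⊕ Rl) := ⟨Sum.inl p0.2⟩
    choose! ρ hρ1 hρ2 using hmap
    have := Finset.card_le_card_of_injOn ρ (fun p hp => hρ2 p hp) ?_
    · exact this.trans (hres_card (g s))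
    · intro p hpm q hqm heq
      by_contra hne
      have hpA := (Finset.mem_filter.mp hpm).1
      have hqA := (Finset.mem_filter.mp hqm).1
      exact hAdisj p hpA q hqA hne (hres_conf p q (ρ p) (hρ1 p hpm) (heq ▸ hρ1 q hqm))
  calc ∑ p ∈ A, val p
      ≤ ∑ p ∈ A, val (g (f p)) := Finset.sum_le_sum hstep
    _ = ∑ s : Fin K, ∑ p ∈ A.filter (fun p => f p = s), val (g (f p)) :=
        (Finset.sum_fiberwise_of_maps_to (fun p _ => Finset.mem_univ (f p)) _).symm
    _ = ∑ s : Fin K, ∑ p ∈ A.filter (fun p => f p = s), val (g s) := by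
        refine Finset.sum_congr rfl fun s _ => Finset.sum_congr rfl fun p hp => ?_
        rw [(Finset.mem_filter.mp hp).2]
    _ = ∑ s : Fin K, ((A.filter (fun p => f p = s)).card : ℝ) * val (g s) := by
        simp [Finset.sum_const, nsmul_eq_mul]
    _ ≤ ∑ s : Fin K, 3 * val (g s) := by
        refine Finset.sum_le_sum fun s _ => mul_le_mul_of_nonneg_right ?_ (hval _)
        exact_mod_cast hfiber s
    _ = 3 * ∑ s : Fin K, val (g s) := (Finset.mul_sum _ _ _).symm
end

section
/- Each selection made by the 1/3-approximate greedy algorithm can conflict with (i.e., share a robot or a target with) at most three assignments of the optimal solution in the heterogeneous setting, where a greedy pair of limited robots can block two optimal pairs plus the assignment of its chosen target. -/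
open Finset

/-- In the heterogeneous setting, any single (greedy) assignment conflicts with at
most three pairwise robot- and target-disjoint assignments: a pair of limited robots
can block two optimal pairs plus the assignment of its chosen target. -/
theorem greedy_selection_conflicts_at_most_three {Rs Rl T : Type*}
    [DecidableEq Rs] [DecidableEq Rl] [DecidableEq T]
    (p : (Rs ⊕ (Rl × Rl)) × T) (hp : ValidAsg p)
    (A : Finset ((Rs ⊕ (Rl × Rl)) × T))
    (hA : ∀ a ∈ A, ValidAsg a)
    (hdisj : ∀ a ∈ A, ∀ b ∈ A, a ≠ b → ¬ ConflictAsg a b)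
    (hconf : ∀ a ∈ A, ConflictAsg p a) :
    A.card ≤ 3 := by
  classical
  set S : Finset (T ⊕ Rs ⊕ Rl) :=
    insert (Sum.inl p.2)
      ((robotsS p.1).image (fun r => Sum.inr (Sum.inl r)) ∪
        (robotsL p.1).image (fun r => Sum.inr (Sum.inr r))) with hS
  have hf : ∀ a ∈ A, ∃ w, w ∈ S ∧
      ((w = Sum.inl a.2 ∧ a.2 = p.2) ∨
        (∃ r, w = Sum.inr (Sum.inl r) ∧ r ∈ robotsS a.1) ∨
        (∃ r, w = Sum.inr (Sum.inr r) ∧ r ∈ robotsL a.1)) := by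
    intro a ha
    rcases hconf a ha with h | h | h
    · exact ⟨Sum.inl a.2, by simp [hS, ← h], Or.inl ⟨rfl, h.symm⟩⟩
    · obtain ⟨r, hr1, hr2⟩ := Finset.not_disjoint_iff.mp h
      exact ⟨Sum.inr (Sum.inl r), Finset.mem_insert_of_mem
        (Finset.mem_union_left _ (Finset.mem_image_of_mem _ hr1)),
        Or.inr (Or.inl ⟨r, rfl, hr2⟩)⟩
    · obtain ⟨r, hr1, hr2⟩ := Finset.not_disjoint_iff.mp h
      exact ⟨Sum.inr (Sum.inr r), Finset.mem_insert_of_mem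
        (Finset.mem_union_right _ (Finset.mem_image_of_mem _ hr1)),
        Or.inr (Or.inr ⟨r, rfl, hr2⟩)⟩
  have : Nonempty (T ⊕ Rs ⊕ Rl) := ⟨Sum.inl p.2⟩
  choose! w hwS hw using hf
  have hcard : A.card ≤ S.card := by
    apply Finset.card_le_card_of_injOn w (fun a ha => hwS a ha)
    intro a ha b hb hab
    by_contra hne
    apply hdisj a ha b hb hne
    rcases hw a ha with ⟨h1, h2⟩ | ⟨r, hr1, hr2⟩ | ⟨r, hr1, hr2⟩ <;>
      rcases hw b hb with ⟨g1, g2⟩ | ⟨s, hs1, hs2⟩ | ⟨s, hs1, hs2⟩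
    · exact Or.inl (h2.trans g2.symm)
    · rw [h1, hs1] at hab; simp at hab
    · rw [h1, hs1] at hab; simp at hab
    · rw [hr1, g1] at hab; simp at hab
    · rw [hr1, hs1] at hab
      simp only [Sum.inr.injEq, Sum.inl.injEq] at hab
      exact Or.inr (Or.inl (Finset.not_disjoint_iff.mpr
        ⟨r, hr2, by rw [hab]; exact hs2⟩))
    · rw [hr1, hs1] at hab; simp at hab
    · rw [hr1, g1] at hab; simp at hab
    · rw [hr1, hs1] at hab; simp at hab
    · rw [hr1, hs1] at hab
      simp only [Sum.inr.injEq] at hab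
      exact Or.inr (Or.inr (Finset.not_disjoint_iff.mpr
        ⟨r, hr2, by rw [hab]; exact hs2⟩))
  refine hcard.trans ?_
  have h2 : (robotsS p.1).card + (robotsL p.1).card ≤ 2 := by
    rcases p.1 with r | ⟨a, b⟩
    · simp [robotsS, robotsL]
    · simpa [robotsS, robotsL] using Finset.card_insert_le a {b}
  calc S.card ≤ ((robotsS p.1).image (fun r => Sum.inr (Sum.inl r)) ∪
        (robotsL p.1).image (fun r => Sum.inr (Sum.inr r))).card + 1 := by
          rw [hS]; exact Finset.card_insert_le _ _
    _ ≤ ((robotsS p.1).image (fun r => Sum.inr (Sum.inl r))).card +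
        ((robotsL p.1).image (fun r => Sum.inr (Sum.inr r))).card + 1 :=
          Nat.add_le_add_right (Finset.card_union_le _ _) 1
    _ ≤ (robotsS p.1).card + (robotsL p.1).card + 1 :=
          Nat.add_le_add_right (Nat.add_le_add (Finset.card_image_le) (Finset.card_image_le)) 1
    _ ≤ 3 := by omega
end
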